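/- arXiv:1508.04050 — 3 statements merged into one kernel-verified Lean document; each statement's English description precedes it below -/
import Mathlib

section
/- Let n ∈ ℕ, k : Fin n → ℕ, σ ∈ Σ_n, and h_i ∈ Σ_{k i} for each i. Then in Σ_{∑ i, k i} one has δ_{n;k}(σ) · β_k(h_1, …, h_n) = β_{k∘σ⁻¹}(h_{σ⁻¹(1)}, …, h_{σ⁻¹(n)}) · δ_{n;k}(σ), where the right-hand block sum is regarded as an element of Σ_{∑ i, k i} via the equality ∑ i, k(σ⁻¹ i) = ∑ i, k i. -/
/-- Splitting a sigma type over `Fin (n+1)` as first block plus the rest. -/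
def sigmaFinSuccEquiv (n : ℕ) (β : Fin (n + 1) → Type*) :
    ((i : Fin (n + 1)) × β i) ≃ β 0 ⊕ ((i : Fin n) × β i.succ) where
  toFun x := Fin.cases (motive := fun i => β i → β 0 ⊕ ((i : Fin n) × β i.succ))
    (fun b => Sum.inl b) (fun i b => Sum.inr ⟨i, b⟩) x.1 x.2
  invFun x := Sum.elim (fun b => ⟨0, b⟩) (fun p => ⟨p.1.succ, p.2⟩) x
  left_inv := by
    rintro ⟨i, b⟩
    induction i using Fin.cases <;> simp
  right_inv := by rintro (b | ⟨i, b⟩) <;> simp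

/-- The canonical order-preserving equivalence `(Σ i : Fin n, Fin (k i)) ≃ Fin (∑ i, k i)`,
putting the blocks in order. -/
def blockFinSigmaFinEquiv : ∀ {n : ℕ} {k : Fin n → ℕ}, ((i : Fin n) × Fin (k i)) ≃ Fin (∑ i, k i)
  | 0, k => (Equiv.equivOfIsEmpty _ (Fin 0)).trans (finCongr (Fin.sum_univ_zero k).symm)
  | n + 1, k =>
      ((sigmaFinSuccEquiv n fun i => Fin (k i)).trans
        ((Equiv.refl (Fin (k 0))).sumCongr (blockFinSigmaFinEquiv (k := fun i => k i.succ)))).trans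
        (finSumFinEquiv.trans (finCongr (Fin.sum_univ_succ k).symm))

/-- The block sum `β_k(h₁, …, h_n)` of permutations `h i : Σ_{k i}`:
on the sigma type it is `(i, j) ↦ (i, h i j)`. -/
def blockSum {n : ℕ} {k : Fin n → ℕ} (h : (i : Fin n) → Equiv.Perm (Fin (k i))) :
    Equiv.Perm (Fin (∑ i, k i)) :=
  blockFinSigmaFinEquiv.symm.trans ((Equiv.sigmaCongrRight h).trans blockFinSigmaFinEquiv)

/-- The block permutation `δ_{n;k}(σ)`: on the sigma type it is `(i, j) ↦ (σ i, j)`,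
regarded as a permutation of `Fin (∑ i, k i)` via `∑ i, k (σ⁻¹ i) = ∑ i, k i`. -/
def blockPerm {n : ℕ} (k : Fin n → ℕ) (σ : Equiv.Perm (Fin n)) :
    Equiv.Perm (Fin (∑ i, k i)) :=
  blockFinSigmaFinEquiv.symm.trans
    ((Equiv.sigmaCongrLeft' (β := fun i => Fin (k i)) σ).trans
      (blockFinSigmaFinEquiv.trans (finCongr (Equiv.sum_comp σ.symm k))))

/-- Transport of permutations along an equality of cardinalities. -/
def permCast {a b : ℕ} (h : a = b) : Equiv.Perm (Fin a) ≃ Equiv.Perm (Fin b) :=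
  (finCongr h).permCongr

/-- Flattening a doubly indexed family of sizes. -/
def flatten {n : ℕ} {k : Fin n → ℕ} (m : (i : Fin n) → Fin (k i) → ℕ) :
    Fin (∑ i, k i) → ℕ :=
  fun y => m (blockFinSigmaFinEquiv.symm y).1 (blockFinSigmaFinEquiv.symm y).2

/-- The canonical identification of the double sum with the sum of the flattened family. -/
theorem sum_flatten {n : ℕ} {k : Fin n → ℕ} (m : (i : Fin n) → Fin (k i) → ℕ) :
    ∑ i, ∑ j, m i j = ∑ y, flatten m y := by
  rw [← Equiv.sum_comp (blockFinSigmaFinEquiv (k := k)) (flatten m),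
    ← Finset.univ_sigma_univ, Finset.sum_sigma]
  exact Finset.sum_congr rfl fun a _ => Finset.sum_congr rfl fun s _ => by
    simp only [flatten]
    conv_rhs => rw [Equiv.symm_apply_apply]

theorem delta_mul_beta_eq_beta_permuted_mul_delta {n : ℕ} (k : Fin n → ℕ)
    (σ : Equiv.Perm (Fin n)) (h : (i : Fin n) → Equiv.Perm (Fin (k i))) :
    blockPerm k σ * blockSum h =
      permCast (Equiv.sum_comp σ.symm k) (blockSum fun i => h (σ.symm i)) * blockPerm k σ := by
  have key2 : (Equiv.sigmaCongrLeft (β := fun i => Fin (k i)) σ.symm).trans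
      (Equiv.sigmaCongrRight fun i => (h i).symm) =
      (Equiv.sigmaCongrRight fun a => (h (σ.symm a)).symm).trans
        (Equiv.sigmaCongrLeft (β := fun i => Fin (k i)) σ.symm) :=
    Equiv.ext fun ⟨a, b⟩ => rfl
  have key : (Equiv.sigmaCongrRight h).trans
      (Equiv.sigmaCongrLeft' (β := fun i => Fin (k i)) σ) =
      (Equiv.sigmaCongrLeft' (β := fun i => Fin (k i)) σ).trans
        (Equiv.sigmaCongrRight fun i => h (σ.symm i)) := by
    refine Equiv.symm_bijective.injective (Equiv.ext fun z => ?_)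
    have := Equiv.ext_iff.1 key2 z
    simp only [Equiv.trans_apply] at this ⊢
    simp only [Equiv.sigmaCongrLeft', Equiv.symm_symm, Equiv.symm_trans_apply,
      Equiv.sigmaCongrRight_symm, Equiv.symm_symm] at this ⊢
    exact this.symm
  ext x
  have hkey := Equiv.ext_iff.1 key (blockFinSigmaFinEquiv.symm x)
  simp only [Equiv.trans_apply] at hkey
  simp only [Equiv.Perm.mul_apply, blockSum, blockPerm, permCast, Equiv.permCongr_apply,
    Equiv.trans_apply, Equiv.symm_apply_apply, finCongr_apply, finCongr_symm,
    Fin.cast_cast]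
  rw [hkey]
  simp
end

section
/- Let n ∈ ℕ, k : Fin n → ℕ, m : (i : Fin n) → Fin (k i) → ℕ, and h_{ij} ∈ Σ_{m_i(j)}. Then β_{(∑_j m_1(j), …, ∑_j m_n(j))}(β_{m_1}(h_{1,1}, …, h_{1,k_1}), …, β_{m_n}(h_{n,1}, …, h_{n,k_n})) = β_{m♭}(h♭), where m♭ and h♭ denote the flattened family of sizes and of permutations, and both sides are regarded as permutations of the same finite set via the canonical identification of ∑_i ∑_j m_i(j) with the sum of the flattened family. -/
theorem Iio_filter_eq {n : ℕ} (t : Fin n) : Finset.Iio t = Finset.univ.filter (· < t) := by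
  ext x; simp

theorem sum_Iio_succ {M : Type*} [AddCommMonoid M] {n : ℕ} (f : Fin (n+1) → M) (i : Fin n) :
    ∑ x ∈ Finset.Iio i.succ, f x = f 0 + ∑ x ∈ Finset.Iio i, f x.succ := by
  rw [Iio_filter_eq, Finset.sum_filter, Fin.sum_univ_succ, Iio_filter_eq, Finset.sum_filter]
  simp [Fin.succ_lt_succ_iff, Fin.succ_pos]

theorem finSigmaFinEquiv_val : ∀ {n : ℕ} {k : Fin n → ℕ} (p : (i : Fin n) × Fin (k i)),
    (blockFinSigmaFinEquiv p : ℕ) = ∑ i ∈ Finset.Iio p.1, k i + p.2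
  | 0, k, p => p.1.elim0
  | n + 1, k, ⟨i, j⟩ => by
    induction i using Fin.cases with
    | zero => simp [blockFinSigmaFinEquiv, sigmaFinSuccEquiv]
    | succ i =>
      simp only [blockFinSigmaFinEquiv, sigmaFinSuccEquiv, Equiv.trans_apply, Equiv.coe_fn_mk,
        Fin.cases_succ, Equiv.sumCongr_apply, Sum.map_inr, finSumFinEquiv_apply_right,
        finCongr_apply, Fin.coe_cast, Fin.coe_natAdd]
      rw [finSigmaFinEquiv_val (k := fun i => k i.succ) ⟨i, j⟩, sum_Iio_succ]
      ring

theorem lt_of_fst_lt {n : ℕ} {k : Fin n → ℕ} (q r : (i : Fin n) × Fin (k i)) (h : q.1 < r.1) :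
    (blockFinSigmaFinEquiv q : ℕ) < blockFinSigmaFinEquiv r := by
  rw [finSigmaFinEquiv_val, finSigmaFinEquiv_val]
  calc ∑ i ∈ Finset.Iio q.1, k i + ↑q.2 < ∑ i ∈ Finset.Iio q.1, k i + k q.1 :=
        Nat.add_lt_add_left q.2.isLt _
    _ = ∑ i ∈ Finset.Iic q.1, k i := by
        rw [← Finset.Iio_insert, Finset.sum_insert Finset.notMem_Iio_self]; ring
    _ ≤ ∑ i ∈ Finset.Iio r.1, k i :=
        Finset.sum_le_sum_of_subset (fun x hx => by
          simp only [Finset.mem_Iic] at hx; simp only [Finset.mem_Iio]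
          exact lt_of_le_of_lt hx h)
    _ ≤ _ := Nat.le_add_right _ _

theorem finSigmaFinEquiv_lt_iff {n : ℕ} {k : Fin n → ℕ} (q r : (i : Fin n) × Fin (k i)) :
    blockFinSigmaFinEquiv q < blockFinSigmaFinEquiv r ↔
      q.1 < r.1 ∨ (q.1 = r.1 ∧ (q.2 : ℕ) < (r.2 : ℕ)) := by
  rw [Fin.lt_def]
  constructor
  · intro H
    rcases lt_trichotomy q.1 r.1 with h | h | h
    · exact Or.inl h
    · refine Or.inr ⟨h, ?_⟩
      have hs : ∑ i ∈ Finset.Iio q.1, k i = ∑ i ∈ Finset.Iio r.1, k i := by rw [h]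
      rw [finSigmaFinEquiv_val, finSigmaFinEquiv_val] at H
      omega
    · exact absurd (lt_of_fst_lt r q h) (by omega)
  · rintro (h | ⟨h, h2⟩)
    · exact lt_of_fst_lt q r h
    · have hs : ∑ i ∈ Finset.Iio q.1, k i = ∑ i ∈ Finset.Iio r.1, k i := by rw [h]
      rw [finSigmaFinEquiv_val, finSigmaFinEquiv_val]
      omega

theorem sum_Iio_flatten {n : ℕ} {k : Fin n → ℕ} (m : (i : Fin n) → Fin (k i) → ℕ)
    (i : Fin n) (j : Fin (k i)) :
    ∑ p ∈ Finset.Iio (blockFinSigmaFinEquiv ⟨i, j⟩), flatten m p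
      = ∑ a ∈ Finset.Iio i, ∑ b, m a b + ∑ b ∈ Finset.Iio j, m i b := by
  rw [Iio_filter_eq, Finset.sum_filter,
    ← Equiv.sum_comp (blockFinSigmaFinEquiv (k := k))
      (fun p => if p < blockFinSigmaFinEquiv ⟨i, j⟩ then flatten m p else 0),
    ← Finset.univ_sigma_univ, Finset.sum_sigma]
  have point : ∀ a : Fin n,
      (∑ b : Fin (k a), if blockFinSigmaFinEquiv ⟨a, b⟩ < blockFinSigmaFinEquiv ⟨i, j⟩ then
          flatten m (blockFinSigmaFinEquiv ⟨a, b⟩) else 0)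
        = (if a < i then ∑ b, m a b else 0) + (if a = i then ∑ b ∈ Finset.Iio j, m i b else 0) := by
    intro a
    have hfl : ∀ b : Fin (k a), flatten m (blockFinSigmaFinEquiv ⟨a, b⟩) = m a b := by
      intro b; simp only [flatten]; rw [Equiv.symm_apply_apply]
    rcases lt_trichotomy a i with h | h | h
    · simp [finSigmaFinEquiv_lt_iff, h, ne_of_lt h, hfl]
    · subst h
      rw [if_neg (lt_irrefl a), if_pos rfl, Nat.zero_add, Iio_filter_eq, Finset.sum_filter]
      refine Finset.sum_congr rfl fun b _ => ?_
      rw [hfl]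
      have hc : blockFinSigmaFinEquiv ⟨a, b⟩ < blockFinSigmaFinEquiv ⟨a, j⟩ ↔ b < j := by
        rw [finSigmaFinEquiv_lt_iff, Fin.lt_def]; simp
      rw [if_congr hc rfl rfl]
    · simp [finSigmaFinEquiv_lt_iff, not_lt_of_gt h, (ne_of_gt h), h.not_gt]
  calc _ = ∑ a, ((if a < i then ∑ b, m a b else 0) +
        (if a = i then ∑ b ∈ Finset.Iio j, m i b else 0)) :=
        Finset.sum_congr rfl fun a _ => point a
    _ = _ := by
      rw [Finset.sum_add_distrib, Finset.sum_ite_eq' Finset.univ i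
        (fun _ => ∑ b ∈ Finset.Iio j, m i b), if_pos (Finset.mem_univ i)]
      congr 1
      rw [Iio_filter_eq, Finset.sum_filter]

theorem perm_val_congr {n : ℕ} {k : Fin n → ℕ} {m : (i : Fin n) → Fin (k i) → ℕ}
    (h : (i : Fin n) → (j : Fin (k i)) → Equiv.Perm (Fin (m i j)))
    {q q' : (i : Fin n) × Fin (k i)} (e : q = q')
    (w : Fin (m q.1 q.2)) (v : Fin (m q'.1 q'.2)) (hv : (w : ℕ) = v) :
    ((h q.1 q.2 w : Fin (m q.1 q.2)) : ℕ) = h q'.1 q'.2 v := by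
  subst e
  have : w = v := Fin.ext hv
  subst this
  rfl

theorem blockSum_blockSum {n : ℕ} (k : Fin n → ℕ)
    (m : (i : Fin n) → Fin (k i) → ℕ)
    (h : (i : Fin n) → (j : Fin (k i)) → Equiv.Perm (Fin (m i j))) :
    permCast (sum_flatten m) (blockSum fun i => blockSum (h i)) =
      blockSum (fun y => h (blockFinSigmaFinEquiv.symm y).1 (blockFinSigmaFinEquiv.symm y).2 :
        (y : Fin (∑ i, k i)) → Equiv.Perm (Fin (flatten m y))) := by
  refine Equiv.ext fun x => Fin.val_injective ?_
  rcases hq : blockFinSigmaFinEquiv.symm ((finCongr (sum_flatten m)).symm x) with ⟨a, u⟩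
  rcases hu : blockFinSigmaFinEquiv.symm u with ⟨b, v⟩
  rcases hw : blockFinSigmaFinEquiv.symm x with ⟨y', w⟩
  have h1 : ((finCongr (sum_flatten m)).symm x) = blockFinSigmaFinEquiv ⟨a, u⟩ := by
    rw [← hq, Equiv.apply_symm_apply]
  have h2 : u = blockFinSigmaFinEquiv ⟨b, v⟩ := by rw [← hu, Equiv.apply_symm_apply]
  have hx2 : x = blockFinSigmaFinEquiv ⟨y', w⟩ := by rw [← hw, Equiv.apply_symm_apply]
  have hx' : ((finCongr (sum_flatten m)).symm x : ℕ) = x := rfl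
  have hxval : (x : ℕ) = ∑ i ∈ Finset.Iio a, (∑ j, m i j) + (∑ j ∈ Finset.Iio b, m a j + v) := by
    rw [← hx', h1, finSigmaFinEquiv_val (k := fun i => ∑ j, m i j) ⟨a, u⟩, h2,
      finSigmaFinEquiv_val (k := m a) ⟨b, v⟩]
  have pf : m a b = flatten m (blockFinSigmaFinEquiv ⟨a, b⟩) := by
    simp only [flatten]; rw [Equiv.symm_apply_apply]
  have hsig : (⟨y', w⟩ : (y : Fin (∑ i, k i)) × Fin (flatten m y))
      = ⟨blockFinSigmaFinEquiv ⟨a, b⟩, finCongr pf v⟩ := by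
    apply blockFinSigmaFinEquiv.injective
    apply Fin.val_injective
    rw [← hx2]
    rw [finSigmaFinEquiv_val (k := flatten m) ⟨blockFinSigmaFinEquiv ⟨a, b⟩, finCongr pf v⟩]
    simp only [sum_Iio_flatten, finCongr_apply_coe, hxval]
    ring
  have ey : y' = blockFinSigmaFinEquiv ⟨a, b⟩ := congrArg Sigma.fst hsig
  have vw : (w : ℕ) = v := by
    rcases Sigma.mk.inj_iff.mp hsig with ⟨e1, e2⟩
    rw [show (w : ℕ) = ((⟨y', w⟩ : (y : Fin (∑ i, k i)) × Fin (flatten m y)).2 : ℕ) from rfl]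
    rw [hsig, finCongr_apply_coe]
  have eqq : blockFinSigmaFinEquiv.symm y' = (⟨a, b⟩ : (i : Fin n) × Fin (k i)) := by
    rw [ey, Equiv.symm_apply_apply]
  have bsa : ∀ {N : ℕ} {K : Fin N → ℕ} (g : (i : Fin N) → Equiv.Perm (Fin (K i)))
      (z : Fin (∑ i, K i)), blockSum g z
        = blockFinSigmaFinEquiv (Equiv.sigmaCongrRight g (blockFinSigmaFinEquiv.symm z)) := fun _ _ => rfl
  simp only [permCast, Equiv.permCongr_apply]
  rw [bsa]
  erw [bsa (K := flatten m) (fun y => h (blockFinSigmaFinEquiv.symm y).1 (blockFinSigmaFinEquiv.symm y).2) x]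
  rw [hq, hw]
  simp only [Equiv.sigmaCongrRight, Equiv.coe_fn_mk]
  rw [bsa (K := m a) (h a) u, hu]
  simp only [Equiv.sigmaCongrRight, Equiv.coe_fn_mk]
  rw [finCongr_apply_coe, finSigmaFinEquiv_val (k := fun i => ∑ j, m i j),
    finSigmaFinEquiv_val (k := m a), finSigmaFinEquiv_val (k := flatten m)]
  dsimp only
  show ∑ i ∈ Finset.Iio a, ∑ j : Fin (k i), m i j + (∑ i ∈ Finset.Iio b, m a i + ((h a b) v : ℕ))
      = ∑ i ∈ Finset.Iio y', flatten m i +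
        ((h (blockFinSigmaFinEquiv.symm y').1 (blockFinSigmaFinEquiv.symm y').2 w :
          Fin (m (blockFinSigmaFinEquiv.symm y').1 (blockFinSigmaFinEquiv.symm y').2)) : ℕ)
  rw [perm_val_congr h eqq w v vw, ey, sum_Iio_flatten]
  ring
end

section
/- Let n ≥ 1, j_1, …, j_n ≥ 1 with N = ∑_i j_i ≥ 2. Let J_i = j_1 + ⋯ + j_i and R_i = j_n + j_{n−1} + ⋯ + j_{n−i+1} (partial sums of the reversed sequence). Then in J_N: (s_{1,N} · ∏_{i=1}^{n} s_{R_{i−1}+1, R_i}) · (s_{1,N} · ∏_{i=1}^{n} s_{J_{i−1}+1, J_i}) = e, where s_{p,p} denotes the identity element (the factors within each product pairwise commute, so the order of each product is immaterial). -/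
/-- Generators `s_{p,q}`, `1 ≤ p < q ≤ n`, of the `n`-fruit cactus group. -/
def CactusGen (n : ℕ) : Type :=
  { pq : ℕ × ℕ // 1 ≤ pq.1 ∧ pq.1 < pq.2 ∧ pq.2 ≤ n }

/-- The defining relations of the `n`-fruit cactus group, as elements of the free group:
(i) `s_{p,q}² = e`; (ii) `s_{p,q}s_{k,l} = s_{k,l}s_{p,q}` for disjoint intervals;
(iii) `s_{p,q}s_{k,l} = s_{p+q-l,p+q-k}s_{p,q}` for `p ≤ k < l ≤ q`. -/
def cactusRels (n : ℕ) : Set (FreeGroup (CactusGen n)) :=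
  { x |
    (∃ (p q : ℕ) (h : 1 ≤ p ∧ p < q ∧ q ≤ n),
      x = FreeGroup.of (⟨(p, q), h⟩ : CactusGen n) * FreeGroup.of ⟨(p, q), h⟩) ∨
    (∃ (p q k l : ℕ) (h : 1 ≤ p ∧ p < q ∧ q ≤ n) (h' : 1 ≤ k ∧ k < l ∧ l ≤ n),
      (q < k ∨ l < p) ∧
      x = FreeGroup.of (⟨(p, q), h⟩ : CactusGen n) * FreeGroup.of ⟨(k, l), h'⟩ *
        (FreeGroup.of (⟨(k, l), h'⟩ : CactusGen n) * FreeGroup.of ⟨(p, q), h⟩)⁻¹) ∨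
    (∃ (p q k l : ℕ) (h : 1 ≤ p ∧ p < q ∧ q ≤ n) (h' : 1 ≤ k ∧ k < l ∧ l ≤ n)
        (h'' : 1 ≤ p + q - l ∧ p + q - l < p + q - k ∧ p + q - k ≤ n),
      (p ≤ k ∧ l ≤ q) ∧
      x = FreeGroup.of (⟨(p, q), h⟩ : CactusGen n) * FreeGroup.of ⟨(k, l), h'⟩ *
        (FreeGroup.of (⟨(p + q - l, p + q - k), h''⟩ : CactusGen n) *
          FreeGroup.of ⟨(p, q), h⟩)⁻¹) }

/-- The `n`-fruit cactus group `J_n`, as a presented group. -/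
def CactusGroup (n : ℕ) : Type :=
  PresentedGroup (cactusRels n)

instance (n : ℕ) : Group (CactusGroup n) :=
  inferInstanceAs (Group (PresentedGroup (cactusRels n)))

/-- The generator `s_{p,q}` of the cactus group `J_n`. -/
def s {n : ℕ} (p q : ℕ) (h : 1 ≤ p ∧ p < q ∧ q ≤ n) : CactusGroup n :=
  PresentedGroup.of ⟨(p, q), h⟩

/-- The generator `s_{p,q}` of `J_n` extended by the convention that `s_{p,p}` denotes the
identity element. -/
def sE {n : ℕ} (p q : ℕ) (h : 1 ≤ p ∧ p ≤ q ∧ q ≤ n) : CactusGroup n :=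
  if hlt : p < q then s p q ⟨h.1, hlt, h.2.2⟩ else 1

/-- Transport of cactus group elements along an equality. -/
def Jcast {a b : ℕ} (h : a = b) (x : CactusGroup a) : CactusGroup b := h ▸ x

/-- `partialSum k i = ∑_{j < i} k j`. -/
def partialSum {n : ℕ} (k : Fin n → ℕ) (i : Fin n) : ℕ :=
  ∑ j ∈ Finset.Iio i, k j

theorem partialSum_add_le {n : ℕ} (k : Fin n → ℕ) (i : Fin n) :
    partialSum k i + k i ≤ ∑ j, k j := by
  have h1 : partialSum k i + k i = ∑ j ∈ Finset.Iic i, k j := by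
    rw [partialSum, add_comm, ← Finset.sum_insert (by simp), Finset.Iio_insert]
  rw [h1]
  exact Finset.sum_le_sum_of_subset (Finset.subset_univ _)

section CactusAux

variable {n : ℕ}

lemma rel_one {x : FreeGroup (CactusGen n)} (hx : x ∈ cactusRels n) :
    PresentedGroup.mk (cactusRels n) x = 1 :=
  (QuotientGroup.eq_one_iff x).mpr (Subgroup.subset_normalClosure hx)

lemma s_mul_self (p q : ℕ) (h : 1 ≤ p ∧ p < q ∧ q ≤ n) :
    (s p q h : CactusGroup n) * s p q h = 1 := by
  have := rel_one (n := n) (Or.inl ⟨p, q, h, rfl⟩)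
  erw [map_mul] at this
  exact this

lemma s_comm {p q k l : ℕ} (h : 1 ≤ p ∧ p < q ∧ q ≤ n) (h' : 1 ≤ k ∧ k < l ∧ l ≤ n)
    (hd : q < k ∨ l < p) :
    (s p q h : CactusGroup n) * s k l h' = s k l h' * s p q h := by
  have := rel_one (n := n) (Or.inr (Or.inl ⟨p, q, k, l, h, h', hd, rfl⟩))
  erw [map_mul, map_inv, map_mul] at this
  exact mul_inv_eq_one.mp this

lemma s_rel3 {p q k l : ℕ} (h : 1 ≤ p ∧ p < q ∧ q ≤ n) (h' : 1 ≤ k ∧ k < l ∧ l ≤ n)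
    (h'' : 1 ≤ p + q - l ∧ p + q - l < p + q - k ∧ p + q - k ≤ n)
    (hpk : p ≤ k) (hlq : l ≤ q) :
    (s p q h : CactusGroup n) * s k l h' = s (p + q - l) (p + q - k) h'' * s p q h := by
  have := rel_one (n := n) (Or.inr (Or.inr ⟨p, q, k, l, h, h', h'', ⟨hpk, hlq⟩, rfl⟩))
  erw [map_mul, map_inv, map_mul] at this
  exact mul_inv_eq_one.mp this

lemma sE_congr {p q p' q' : ℕ} (hp : p = p') (hq : q = q')
    (h : 1 ≤ p ∧ p ≤ q ∧ q ≤ n) (h' : 1 ≤ p' ∧ p' ≤ q' ∧ q' ≤ n) :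
    (sE p q h : CactusGroup n) = sE p' q' h' := by subst hp; subst hq; rfl

lemma sE_mul_self (p q : ℕ) (h : 1 ≤ p ∧ p ≤ q ∧ q ≤ n) :
    (sE p q h : CactusGroup n) * sE p q h = 1 := by
  rw [sE]
  split_ifs with h1
  · exact s_mul_self p q _
  · simp

lemma sE_comm {p q k l : ℕ} (h : 1 ≤ p ∧ p ≤ q ∧ q ≤ n) (h' : 1 ≤ k ∧ k ≤ l ∧ l ≤ n)
    (hd : q < k) :
    Commute (sE p q h : CactusGroup n) (sE k l h') := by
  rw [sE, sE]
  split_ifs with h1 h2 h2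
  · exact s_comm _ _ (Or.inl hd)
  all_goals simp [Commute, SemiconjBy]

lemma conj_sE {k l : ℕ} (hN : 2 ≤ n) (h' : 1 ≤ k ∧ k ≤ l ∧ l ≤ n)
    (hw : 1 ≤ 1 ∧ 1 < n ∧ n ≤ n)
    (h'' : 1 ≤ 1 + n - l ∧ 1 + n - l ≤ 1 + n - k ∧ 1 + n - k ≤ n) :
    (s 1 n hw : CactusGroup n) * sE k l h' * s 1 n hw = sE (1 + n - l) (1 + n - k) h'' := by
  rw [sE, sE]
  split_ifs with h1 h2 h2
  · rw [s_rel3 hw ⟨h'.1, h1, h'.2.2⟩ ⟨h''.1, h2, h''.2.2⟩ h'.1 h'.2.2, mul_assoc,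
      s_mul_self, mul_one]
  · exact absurd (by omega : 1 + n - l < 1 + n - k) h2
  · exact absurd (by omega : k < l) h1
  · rw [mul_one, s_mul_self]

lemma conj_list_prod {G : Type*} [Group G] (w : G) (hw : w * w = 1) (l : List G) :
    w * l.prod * w = (l.map (fun x => w * x * w)).prod := by
  have hw' : ∀ x : G, w * (w * x) = x := fun x => by rw [← mul_assoc, hw, one_mul]
  induction l with
  | nil => simpa using hw
  | cons a t ih =>
    simp only [List.prod_cons, List.map_cons, ← ih]
    simp [mul_assoc, hw']

lemma prod_sq_one {G : Type*} [Group G] (l : List G) (h1 : ∀ x ∈ l, x * x = 1)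
    (h2 : l.Pairwise Commute) : l.prod * l.prod = 1 := by
  induction l with
  | nil => simp
  | cons a t ih =>
    rw [List.pairwise_cons] at h2
    have hc : Commute a t.prod := Commute.list_prod_right _ _ fun x hx => h2.1 x hx
    have ih' := ih (fun x hx => h1 x (List.mem_cons_of_mem _ hx)) h2.2
    have ha := h1 a List.mem_cons_self
    simp only [List.prod_cons]
    calc a * t.prod * (a * t.prod) = a * (t.prod * a) * t.prod := by group
      _ = a * (a * t.prod) * t.prod := by rw [hc.eq]
      _ = (a * a) * (t.prod * t.prod) := by group
      _ = 1 := by rw [ha, ih', one_mul]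

lemma partialSum_lt (j : Fin n → ℕ) {i i' : Fin n} (h : i < i') :
    partialSum j i + j i ≤ partialSum j i' := by
  have h1 : partialSum j i + j i = ∑ t ∈ Finset.Iic i, j t := by
    rw [partialSum, add_comm, ← Finset.sum_insert (by simp), Finset.Iio_insert]
  rw [h1, partialSum]
  exact Finset.sum_le_sum_of_subset fun t ht =>
    Finset.mem_Iio.mpr (lt_of_le_of_lt (Finset.mem_Iic.mp ht) h)

lemma partialSum_rev (j : Fin n → ℕ) (i : Fin n) :
    partialSum (fun t : Fin n => j t.rev) i + j i.rev + partialSum j i.rev = ∑ t, j t := by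
  have h1 : partialSum (fun t : Fin n => j t.rev) i = ∑ u ∈ Finset.Ioi i.rev, j u := by
    rw [partialSum]
    refine Finset.sum_nbij' (fun t => t.rev) (fun t => t.rev) ?_ ?_ ?_ ?_ ?_
    all_goals intro a ha
    all_goals simp only [Finset.mem_Iio, Finset.mem_Ioi, Fin.lt_def, Fin.val_rev,
      Fin.rev_rev] at ha ⊢
    all_goals first | rfl | omega
  have h2 : partialSum j i.rev + j i.rev = ∑ t ∈ Finset.Iic i.rev, j t := by
    rw [partialSum, add_comm, ← Finset.sum_insert (by simp), Finset.Iio_insert]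
  have h3 : Finset.Iic i.rev ∪ Finset.Ioi i.rev = Finset.univ := by
    ext x; simp [le_or_gt]
  have h4 : Disjoint (Finset.Iic i.rev) (Finset.Ioi i.rev) := by
    simp [Finset.disjoint_left]
  calc partialSum (fun t : Fin n => j t.rev) i + j i.rev + partialSum j i.rev
      = (partialSum j i.rev + j i.rev) + partialSum (fun t : Fin n => j t.rev) i := by ring
    _ = ∑ t ∈ Finset.Iic i.rev, j t + ∑ u ∈ Finset.Ioi i.rev, j u := by rw [h1, h2]
    _ = ∑ t ∈ Finset.Iic i.rev ∪ Finset.Ioi i.rev, j t := (Finset.sum_union h4).symm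
    _ = ∑ t, j t := by rw [h3]

end CactusAux

/-- In `J_N`, `N = ∑ j_i ≥ 2`, one has
`(s_{1,N} ∏_i s_{R_{i-1}+1, R_i}) (s_{1,N} ∏_i s_{J_{i-1}+1, J_i}) = e`, where `J_i` are the
partial sums of the `j_i` and `R_i` the partial sums of the reversed sequence.
(The factors within each product pairwise commute, so the order is immaterial; we take the
product in the natural order of the indices.) -/
theorem long_element_product_relation (n : ℕ) (hn : 1 ≤ n) (j : Fin n → ℕ)
    (hj : ∀ i, 1 ≤ j i) (hN : 2 ≤ ∑ i, j i) :
    (sE 1 (∑ i, j i) ⟨le_rfl, by omega, le_rfl⟩ *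
        ((List.finRange n).map (fun i => sE (partialSum (fun t : Fin n => j t.rev) i + 1)
          (partialSum (fun t : Fin n => j t.rev) i + j i.rev)
          ⟨by omega, by have := hj i.rev; omega, by
            have h1 : partialSum (fun t : Fin n => j t.rev) i + j i.rev ≤
                ∑ t : Fin n, j t.rev := partialSum_add_le _ i
            have h2 : ∑ t : Fin n, j t.rev = ∑ t, j t :=
              Fintype.sum_equiv Fin.revPerm _ _ fun _ => rfl
            omega⟩)).prod) *
      (sE 1 (∑ i, j i) ⟨le_rfl, by omega, le_rfl⟩ *
        ((List.finRange n).map (fun i => sE (partialSum j i + 1) (partialSum j i + j i)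
          ⟨by omega, by have := hj i; omega, by
            have := partialSum_add_le j i; omega⟩)).prod) = 1 := by
  classical
  have hN1 : 1 < ∑ i, j i := by omega
  have hsumrev : ∑ t : Fin n, j t.rev = ∑ t, j t :=
    Fintype.sum_equiv Fin.revPerm _ _ fun _ => rfl
  have hFb : ∀ i : Fin n, 1 ≤ partialSum j i + 1 ∧
      partialSum j i + 1 ≤ partialSum j i + j i ∧ partialSum j i + j i ≤ ∑ t, j t := fun i =>
    ⟨by omega, by have := hj i; omega, partialSum_add_le j i⟩
  have hGb : ∀ i : Fin n, 1 ≤ partialSum (fun t : Fin n => j t.rev) i + 1 ∧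
      partialSum (fun t : Fin n => j t.rev) i + 1 ≤
        partialSum (fun t : Fin n => j t.rev) i + j i.rev ∧
      partialSum (fun t : Fin n => j t.rev) i + j i.rev ≤ ∑ t, j t := fun i =>
    ⟨by omega, by have := hj i.rev; omega, by
      have := partialSum_add_le (fun t : Fin n => j t.rev) i; omega⟩
  set N := ∑ t : Fin n, j t with hNdef
  have hw : 1 ≤ 1 ∧ 1 < N ∧ N ≤ N := ⟨le_rfl, hN1, le_rfl⟩
  set w : CactusGroup N := s 1 N hw with hwdef
  set F : Fin n → CactusGroup N :=
    fun i => sE (partialSum j i + 1) (partialSum j i + j i) (hFb i) with hFdef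
  set G : Fin n → CactusGroup N :=
    fun i => sE (partialSum (fun t : Fin n => j t.rev) i + 1)
      (partialSum (fun t : Fin n => j t.rev) i + j i.rev) (hGb i) with hGdef
  have hsE1 : ∀ hh : 1 ≤ 1 ∧ 1 ≤ N ∧ N ≤ N, (sE 1 N hh : CactusGroup N) = w := by
    intro hh; unfold sE; rw [dif_pos hN1]
  show (sE 1 N ⟨le_rfl, by omega, le_rfl⟩ * ((List.finRange n).map G).prod) *
      (sE 1 N ⟨le_rfl, by omega, le_rfl⟩ * ((List.finRange n).map F).prod) = 1
  rw [hsE1]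
  have hww : w * w = 1 := s_mul_self 1 N hw
  have hcomm : ∀ i i' : Fin n, i < i' → Commute (F i) (F i') := by
    intro i i' hii
    exact sE_comm _ _ (by have := partialSum_lt j hii; omega)
  have hpairF : ((List.finRange n).map F).Pairwise Commute := by
    rw [List.pairwise_map]
    exact List.Pairwise.imp (fun hab => hcomm _ _ hab) (List.pairwise_lt_finRange n)
  have hsqF : ∀ x ∈ (List.finRange n).map F, x * x = 1 := by
    intro x hx
    simp only [List.mem_map] at hx
    obtain ⟨i, -, rfl⟩ := hx
    exact sE_mul_self _ _ _
  have hBB : ((List.finRange n).map F).prod * ((List.finRange n).map F).prod = 1 :=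
    prod_sq_one _ hsqF hpairF
  have hconj : ∀ i : Fin n, w * G i * w = F i.rev := by
    intro i
    have hrev := partialSum_rev j i
    have hGbi := hGb i
    rw [hwdef, hGdef]
    rw [conj_sE (by omega) (hGb i) hw ⟨by omega, by omega, by omega⟩]
    exact sE_congr (by omega) (by omega) _ _
  have hA : w * ((List.finRange n).map G).prod * w = ((List.finRange n).map F).prod := by
    rw [conj_list_prod w hww, List.map_map]
    have h1 : (fun x => w * x * w) ∘ G = F ∘ Fin.rev := funext fun i => hconj i
    rw [h1, ← List.map_map, ← List.finRange_reverse, List.map_reverse]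
    exact List.Perm.prod_eq' (List.reverse_perm _)
      (List.pairwise_reverse.mpr (hpairF.imp fun h => h.symm))
  calc (w * ((List.finRange n).map G).prod) * (w * ((List.finRange n).map F).prod)
      = (w * ((List.finRange n).map G).prod * w) * ((List.finRange n).map F).prod := by group
    _ = ((List.finRange n).map F).prod * ((List.finRange n).map F).prod := by rw [hA]
    _ = 1 := hBB
end
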